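/- arXiv:2304.11932 — 7 statements merged into one kernel-verified Lean document; each statement's English description precedes it below -/
import Mathlib

section
/- For all words u and v over a finite alphabet A, ι(u·v) ≤ ι(u) + ι(v) + 1. -/
/-- The subword universality index `ι(u)`: the largest `k` such that every word of
length `k` over the alphabet `A` is a subword (subsequence) of `u`. -/
noncomputable def univIndex {A : Type*} (u : List A) : ℕ :=
  sSup {k : ℕ | ∀ w : List A, w.length = k → w.Sublist u}

lemma exists_not_sublist_univIndex {A : Type*} [Nonempty A] (u : List A) :
    ∃ w : List A, w.length = univIndex u + 1 ∧ ¬ w.Sublist u := by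
  by_contra h
  push_neg at h
  have hmem : univIndex u + 1 ∈ {k : ℕ | ∀ w : List A, w.length = k → w.Sublist u} :=
    fun w hw => h w hw
  have hbdd : BddAbove {k : ℕ | ∀ w : List A, w.length = k → w.Sublist u} := by
    refine ⟨u.length, fun k hk => ?_⟩
    have := hk (List.replicate k (Classical.arbitrary A)) List.length_replicate
    simpa using this.length_le
  have := le_csSup hbdd hmem
  unfold univIndex at this
  omega

/-- `ι(u·v) ≤ ι(u) + ι(v) + 1`. -/
theorem univIndex_append_le {A : Type*} [Fintype A] [Nonempty A] (u v : List A) :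
    univIndex (u ++ v) ≤ univIndex u + univIndex v + 1 := by
  classical
  obtain ⟨w₁, hw1len, hw1⟩ := exists_not_sublist_univIndex u
  obtain ⟨w₂, hw2len, hw2⟩ := exists_not_sublist_univIndex v
  have hne : {k : ℕ | ∀ w : List A, w.length = k → w.Sublist (u ++ v)}.Nonempty := by
    refine ⟨0, fun w hw => ?_⟩
    rw [List.length_eq_zero_iff] at hw
    simp [hw]
  refine csSup_le hne (fun k hk => ?_)
  by_contra hlt
  push_neg at hlt
  set a := Classical.arbitrary A
  have hlen : (w₁ ++ w₂ ++ List.replicate (k - (w₁.length + w₂.length)) a).length = k := by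
    simp only [List.length_append, List.length_replicate]
    omega
  have hsub := hk _ hlen
  have hsub2 : (w₁ ++ w₂).Sublist (u ++ v) :=
    ((w₁ ++ w₂).prefix_append _).sublist.trans hsub
  rw [List.sublist_append_iff] at hsub2
  obtain ⟨x, y, hxy, hxu, hyv⟩ := hsub2
  have hxp : x <+: w₁ ++ w₂ := hxy ▸ x.prefix_append y
  have hw1p : w₁ <+: w₁ ++ w₂ := w₁.prefix_append w₂
  rcases le_total x.length w₁.length with hle | hle
  · have hx1 : x <+: w₁ := List.prefix_of_prefix_length_le hxp hw1p hle
    obtain ⟨t, ht⟩ := hx1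
    have hy : y = t ++ w₂ := by
      have : x ++ (t ++ w₂) = x ++ y := by
        rw [← List.append_assoc, ht, ← hxy]
      exact (List.append_cancel_left this).symm
    exact hw2 (((t.suffix_append w₂).sublist.trans (hy ▸ hyv)))
  · have hx1 : w₁ <+: x := List.prefix_of_prefix_length_le hw1p hxp hle
    exact hw1 (hx1.sublist.trans hxu)
end

section
/- For every word u over a finite alphabet A, ι(u·u^R) = 2·ι(u), where u^R denotes the mirror (reversal) of u. -/
section Aux

variable {A : Type*} [Nonempty A]

private lemma univ_zero_mem (u : List A) :
    0 ∈ {k : ℕ | ∀ w : List A, w.length = k → w.Sublist u} := by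
  intro w hw
  rw [List.length_eq_zero_iff] at hw
  simp [hw]

private lemma univ_bdd (u : List A) :
    BddAbove {k : ℕ | ∀ w : List A, w.length = k → w.Sublist u} := by
  refine ⟨u.length, fun k hk => ?_⟩
  obtain ⟨a⟩ := ‹Nonempty A›
  have := (hk (List.replicate k a) (by simp)).length_le
  simpa using this

private lemma univ_dclosed (u : List A) {j k : ℕ} (hjk : j ≤ k)
    (hk : k ∈ {k : ℕ | ∀ w : List A, w.length = k → w.Sublist u}) :
    j ∈ {k : ℕ | ∀ w : List A, w.length = k → w.Sublist u} := by
  intro w hw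
  obtain ⟨a⟩ := ‹Nonempty A›
  have h := hk (w ++ List.replicate (k - j) a) (by simp [hw]; omega)
  exact (List.sublist_append_left w _).trans h

private lemma univIndex_mem (u : List A) :
    univIndex u ∈ {k : ℕ | ∀ w : List A, w.length = k → w.Sublist u} :=
  Nat.sSup_mem ⟨0, univ_zero_mem u⟩ (univ_bdd u)

private lemma exists_witness (u : List A) :
    ∃ z : List A, z.length = univIndex u + 1 ∧ ¬ z.Sublist u := by
  by_contra h
  push_neg at h
  have hmem : univIndex u + 1 ∈ {k : ℕ | ∀ w : List A, w.length = k → w.Sublist u} := h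
  have h2 := le_csSup (univ_bdd u) hmem
  rw [← univIndex] at h2
  omega

private lemma univIndex_reverse (u : List A) : univIndex u.reverse = univIndex u := by
  unfold univIndex
  congr 1
  ext k
  constructor
  · intro hk w hw
    have := hk w.reverse (by simp [hw])
    have := this.reverse
    simpa using this
  · intro hk w hw
    have := (hk w.reverse (by simp [hw])).reverse
    simpa using this

end Aux

/-- `ι(u·u^R) = 2·ι(u)` where `u^R` is the mirror (reversal) of `u`. -/
theorem univIndex_append_reverse {A : Type*} [Fintype A] [Nonempty A] (u : List A) :
    univIndex (u ++ u.reverse) = 2 * univIndex u := by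
  set k := univIndex u with hk
  apply le_antisymm
  · -- upper bound: 2k+1 is not achievable
    by_contra hlt
    push_neg at hlt
    obtain ⟨z, hzlen, hznot⟩ := exists_witness u
    have h2k1 : 2 * k + 1 ∈ {m : ℕ | ∀ w : List A, w.length = m → w.Sublist (u ++ u.reverse)} :=
      univ_dclosed _ (by omega) (univIndex_mem (u ++ u.reverse))
    set w : List A := z ++ z.dropLast.reverse with hw
    have hzne : z ≠ [] := by intro h; simp [h] at hzlen
    have hwlen : w.length = 2 * k + 1 := by
      simp [hw, hzlen]
      have := @List.length_dropLast _ z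
      omega
    -- w is a palindrome
    have hpal : w.reverse = w := by
      conv_lhs => rw [hw]
      rw [← List.dropLast_append_getLast hzne] at hw ⊢
      simp [List.reverse_append, hw, List.append_assoc]
    have hsub : w.Sublist (u ++ u.reverse) := h2k1 w hwlen
    rw [List.sublist_append_iff] at hsub
    obtain ⟨w1, w2, hsplit, hw1, hw2⟩ := hsub
    have hlen12 : w1.length + w2.length = 2 * k + 1 := by
      have := congrArg List.length hsplit
      simp at this
      omega
    have hzpre : z <+: w := ⟨z.dropLast.reverse, rfl⟩
    by_cases hc : k + 1 ≤ w1.length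
    · -- z is a prefix of w1
      have hw1pre : w1 <+: w := ⟨w2, hsplit.symm⟩
      have : z <+: w1 := List.prefix_of_prefix_length_le hzpre hw1pre (by omega)
      exact hznot (this.sublist.trans hw1)
    · -- w2 has length ≥ k+1, and z is a prefix of w2.reverse
      have hw2len : k + 1 ≤ w2.length := by omega
      have hw2suf : w2 <:+ w := ⟨w1, hsplit.symm⟩
      have hw2pre : w2.reverse <+: w := by
        rw [← hpal]
        exact List.reverse_prefix.mpr hw2suf
      have hzpre2 : z <+: w2.reverse :=
        List.prefix_of_prefix_length_le hzpre hw2pre (by simpa [hzlen])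
      have : w2.reverse.Sublist u := by
        have := hw2.reverse
        simpa using this
      exact hznot (hzpre2.sublist.trans this)
  · -- lower bound
    apply le_csSup (univ_bdd _)
    intro w hwlen
    have h1 : (w.take k).Sublist u := univIndex_mem u _ (by simp [hwlen]; omega)
    have h2 : (w.drop k).Sublist u.reverse := by
      have : ((w.drop k).reverse).Sublist u :=
        univIndex_mem u _ (by simp [hwlen]; omega)
      have := this.reverse
      simpa using this
    rw [← List.take_append_drop k w]
    exact h1.append h2
end

section
/- Let u and u' be two conjugate words over a finite alphabet A. Then ι(u) − 1 ≤ ι(u') ≤ ι(u) + 1. -/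
lemma key_step {A : Type*} (v w : List A) (k : ℕ)
    (h : ∀ x : List A, x.length = k → x.Sublist (v ++ w)) :
    ∀ x : List A, x.length = k - 1 → x.Sublist (w ++ v) := by
  intro x hx
  by_cases hT : ∀ y : List A, y.length = k - 1 → y.Sublist v
  · exact (hT x hx).trans (List.sublist_append_right w v)
  · push_neg at hT
    classical
    have hP : ∃ j : ℕ, ∃ y : List A, y.length = j ∧ ¬ y.Sublist v := ⟨k - 1, hT⟩
    set j := Nat.find hP with hj
    obtain ⟨y, hylen, hynv⟩ := Nat.find_spec hP
    have hjk : j ≤ k - 1 := Nat.find_min' hP hT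
    have hj1 : 1 ≤ j := by
      rcases Nat.eq_zero_or_pos j with h0 | h0
      · exfalso; apply hynv
        have : y = [] := List.eq_nil_of_length_eq_zero (by rw [hylen, ← hj, h0])
        simp [this]
      · exact h0
    have hk1 : 1 ≤ k := le_trans hj1 (le_trans hjk (Nat.sub_le k 1))
    have hmin : ∀ z : List A, z.length = j - 1 → z.Sublist v := by
      intro z hz
      by_contra hzv
      exact Nat.find_min hP (by omega) ⟨z, hz, hzv⟩
    -- split x
    set x1 := x.take (k - j) with hx1
    set x2 := x.drop (k - j) with hx2
    have hx1len : x1.length = k - j := by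
      rw [hx1, List.length_take, hx]; omega
    have hx2len : x2.length = j - 1 := by
      rw [hx2, List.length_drop, hx]; omega
    have hx2v : x2.Sublist v := hmin x2 hx2len
    have hx1w : x1.Sublist w := by
      have hyx1 : (y ++ x1).Sublist (v ++ w) := by
        apply h
        rw [List.length_append, hylen, hx1len]; omega
      rw [List.sublist_append_iff] at hyx1
      obtain ⟨s1, s2, heq, hs1, hs2⟩ := hyx1
      rw [List.append_eq_append_iff] at heq
      rcases heq with ⟨a', hc, _⟩ | ⟨c', hy, hs2eq⟩
      · exfalso; apply hynv
        exact ((List.sublist_append_left y a').trans (hc ▸ hs1))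
      · have : x1.Sublist s2 := hs2eq ▸ List.sublist_append_right c' x1
        exact this.trans hs2
    have hfin : (x1 ++ x2).Sublist (w ++ v) := hx1w.append hx2v
    rwa [hx1, hx2, List.take_append_drop] at hfin

lemma univSet_bddAbove {A : Type*} [Nonempty A] (u : List A) :
    BddAbove {k : ℕ | ∀ w : List A, w.length = k → w.Sublist u} := by
  obtain ⟨a⟩ := ‹Nonempty A›
  refine ⟨u.length, fun k hk => ?_⟩
  have := hk (List.replicate k a) List.length_replicate
  simpa using this.length_le

lemma univSet_zero_mem {A : Type*} (u : List A) :
    (0 : ℕ) ∈ {k : ℕ | ∀ w : List A, w.length = k → w.Sublist u} := by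
  intro w hw
  have : w = [] := List.eq_nil_of_length_eq_zero hw
  simp [this]

lemma univIndex_le {A : Type*} [Nonempty A] (v w : List A) :
    univIndex (v ++ w) ≤ univIndex (w ++ v) + 1 := by
  unfold univIndex
  apply csSup_le ⟨0, univSet_zero_mem _⟩
  intro k hk
  have hmem : k - 1 ∈ {k : ℕ | ∀ x : List A, x.length = k → x.Sublist (w ++ v)} :=
    key_step v w k hk
  have := le_csSup (univSet_bddAbove (w ++ v)) hmem
  omega

/-- For conjugate words `u = v·w` and `u' = w·v`: `ι(u) − 1 ≤ ι(u') ≤ ι(u) + 1`. -/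
theorem univIndex_conjugate {A : Type*} [Fintype A] [Nonempty A] (u u' v w : List A)
    (hu : u = v ++ w) (hu' : u' = w ++ v) :
    univIndex u - 1 ≤ univIndex u' ∧ univIndex u' ≤ univIndex u + 1 := by
  subst hu hu'
  have h1 := univIndex_le v w
  have h2 := univIndex_le w v
  omega
end

section
/- Let u and u' be two conjugate words over a finite alphabet A. If the rest r(u) of the arch factorization of u is the empty word, then ι(u') ≤ ι(u). -/
open Classical in
/-- The arch-jumping function `α` of a word `w`: `α(i)` is the least `j` such that the
factor `w(i,j)` contains every letter of the alphabet `A`, undefined if no such `j` exists. -/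
noncomputable def alphaJump {A : Type*} (w : List A) (i : ℕ) : Option ℕ :=
  if ∃ j, ∀ a : A, a ∈ (w.take j).drop i then
    some (sInf {j : ℕ | ∀ a : A, a ∈ (w.take j).drop i})
  else none

/-- `αⁿ(i)`: the `n`-fold iteration of the arch-jumping function `α` of `w`, starting
from position `i`; `none` if some intermediate step is undefined. -/
noncomputable def alphaIter {A : Type*} (w : List A) (n i : ℕ) : Option ℕ :=
  (fun o => o.bind (alphaJump w))^[n] (some i)

/-- The number of arches in the arch factorization of `w`:
the largest `n` such that `αⁿ(0)` is defined. -/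
noncomputable def numArches {A : Type*} (w : List A) : ℕ :=
  sSup {n : ℕ | (alphaIter w n 0).isSome}

/-- The rest `r(w)` of the arch factorization of `w`: the suffix of `w` remaining after
its arches, i.e. after position `α^m(0)` where `m` is the number of arches. -/
noncomputable def archRest {A : Type*} (w : List A) : List A :=
  w.drop ((alphaIter w (numArches w) 0).getD 0)

section Aux
variable {A : Type*}

lemma alphaIter_zero (w : List A) (i : ℕ) : alphaIter w 0 i = some i := rfl

lemma alphaIter_none (w : List A) (n : ℕ) :
    (fun o => o.bind (alphaJump w))^[n] none = none :=
  Function.iterate_fixed rfl n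

lemma alphaIter_succ (w : List A) (n i : ℕ) :
    alphaIter w (n+1) i = (alphaIter w n i).bind (alphaJump w) := by
  simp [alphaIter, Function.iterate_succ_apply']

lemma alphaIter_succ' (w : List A) (n i j : ℕ) (h : alphaJump w i = some j) :
    alphaIter w (n+1) i = alphaIter w n j := by
  simp [alphaIter, Function.iterate_succ_apply, h]

lemma alphaIter_isSome_succ (w : List A) (n i : ℕ) (h : (alphaIter w (n+1) i).isSome) :
    ∃ j, alphaJump w i = some j := by
  cases hj : alphaJump w i with
  | none =>
      exfalso
      have : alphaIter w (n+1) i = none := by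
        simp [alphaIter, Function.iterate_succ_apply, hj, alphaIter_none]
      rw [this] at h; simp at h
  | some j => exact ⟨j, rfl⟩

lemma alphaJump_spec [Nonempty A] {w : List A} {i j : ℕ} (h : alphaJump w i = some j) :
    i < j ∧ j ≤ w.length ∧ (∀ a : A, a ∈ (w.take j).drop i) ∧
      ∀ j' < j, ¬ ∀ a : A, a ∈ (w.take j').drop i := by
  classical
  unfold alphaJump at h
  by_cases hex : ∃ t, ∀ a : A, a ∈ (w.take t).drop i
  · rw [if_pos hex] at h
    have hj : j = sInf {t | ∀ a : A, a ∈ (w.take t).drop i} := (Option.some.inj h).symm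
    have hmem : ∀ a : A, a ∈ (w.take j).drop i := by
      rw [hj]; exact Nat.sInf_mem hex
    have hij : i < j ∧ i < w.length := by
      obtain ⟨a⟩ := ‹Nonempty A›
      have hne := List.ne_nil_of_mem (hmem a)
      have hlen : 0 < ((w.take j).drop i).length := List.length_pos_iff.mpr hne
      simp only [List.length_drop, List.length_take] at hlen
      omega
    refine ⟨hij.1, ?_, hmem, ?_⟩
    · have hmem' : min j w.length ∈ {t | ∀ a : A, a ∈ (w.take t).drop i} := by
        have : w.take (min j w.length) = w.take j := by
          rw [List.take_eq_take_iff]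
          simp [min_assoc]
        simpa [Set.mem_setOf_eq, this] using hmem
      have := Nat.sInf_le hmem'
      rw [← hj] at this
      omega
    · intro j' hj' hcon
      exact absurd (show j' ∈ {t | ∀ a : A, a ∈ (w.take t).drop i} from hcon)
        (Nat.notMem_of_lt_sInf (hj ▸ hj'))
  · rw [if_neg hex] at h; cases h

lemma alphaJump_isSome_of {w : List A} {i t : ℕ} (h : ∀ a : A, a ∈ (w.take t).drop i) :
    ∃ j, alphaJump w i = some j ∧ j ≤ t := by
  classical
  have hex : ∃ t, ∀ a : A, a ∈ (w.take t).drop i := ⟨t, h⟩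
  refine ⟨sInf {j : ℕ | ∀ a : A, a ∈ (w.take j).drop i}, ?_, Nat.sInf_le h⟩
  unfold alphaJump
  rw [if_pos hex]

lemma alphaIter_le [Nonempty A] {w : List A} {n i p : ℕ} (h : alphaIter w n i = some p) :
    i + n ≤ p := by
  induction n generalizing i with
  | zero => simp [alphaIter_zero] at h; omega
  | succ n ih =>
      obtain ⟨j, hj⟩ := alphaIter_isSome_succ w n i (by rw [h]; rfl)
      rw [alphaIter_succ' w n i j hj] at h
      have h1 := (alphaJump_spec hj).1
      have h2 := ih h
      omega

lemma alphaIter_le_length [Nonempty A] {w : List A} {n i p : ℕ}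
    (h : alphaIter w (n+1) i = some p) : p ≤ w.length := by
  rw [alphaIter_succ] at h
  cases hq : alphaIter w n i with
  | none => rw [hq] at h; exact absurd h (by simp)
  | some q =>
      rw [hq] at h
      simp only [Option.bind_some] at h
      exact (alphaJump_spec h).2.1

lemma numArches_bddAbove [Nonempty A] (w : List A) :
    BddAbove {n : ℕ | (alphaIter w n 0).isSome} := by
  refine ⟨w.length, fun n hn => ?_⟩
  cases n with
  | zero => omega
  | succ n =>
      obtain ⟨p, hp⟩ := Option.isSome_iff_exists.mp hn
      have := alphaIter_le hp
      have := alphaIter_le_length hp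
      omega

lemma numArches_mem [Nonempty A] (w : List A) :
    (alphaIter w (numArches w) 0).isSome :=
  Nat.sSup_mem ⟨0, by simp [alphaIter_zero]⟩ (numArches_bddAbove w)

lemma le_numArches [Nonempty A] {w : List A} {n : ℕ} (h : (alphaIter w n 0).isSome) :
    n ≤ numArches w :=
  le_csSup (numArches_bddAbove w) h

lemma alphaIter_isSome_mono {w : List A} {n n' i : ℕ} (hle : n ≤ n')
    (h : (alphaIter w n' i).isSome) : (alphaIter w n i).isSome := by
  obtain ⟨k, rfl⟩ := Nat.exists_eq_add_of_le hle
  rw [show n + k = k + n from by omega] at h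
  unfold alphaIter at h ⊢
  rw [Function.iterate_add_apply] at h
  cases hq : (fun o => o.bind (alphaJump w))^[n] (some i) with
  | none => rw [hq, alphaIter_none] at h; simp at h
  | some q => rfl

lemma shiftEq (w : List A) (j t i : ℕ) :
    ((w.drop j).take t).drop i = (w.take (j + t)).drop (j + i) := by
  have h1 : (w.take (j+t)).drop j = (w.drop j).take t := by
    rw [List.drop_take]; congr 1; omega
  rw [← h1, List.drop_drop]

lemma alphaJump_shift [Nonempty A] (w : List A) (j i : ℕ) :
    alphaJump w (j + i) = (alphaJump (w.drop j) i).map (· + j) := by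
  classical
  have hset : ∀ t, (∀ a : A, a ∈ ((w.drop j).take t).drop i) ↔
      (∀ a : A, a ∈ (w.take (j+t)).drop (j+i)) := by
    intro t; rw [shiftEq]
  have hTS : ∀ s, (∀ a : A, a ∈ (w.take s).drop (j+i)) →
      j ≤ s ∧ (∀ a : A, a ∈ ((w.drop j).take (s - j)).drop i) := by
    intro s hs
    obtain ⟨a⟩ := ‹Nonempty A›
    have hne := List.ne_nil_of_mem (hs a)
    have hlen : 0 < ((w.take s).drop (j+i)).length := List.length_pos_iff.mpr hne
    simp only [List.length_drop, List.length_take] at hlen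
    have hjs : j + i < s := by omega
    refine ⟨by omega, ?_⟩
    rw [hset, show j + (s - j) = s from by omega]
    exact hs
  by_cases hS : ∃ t, ∀ a : A, a ∈ ((w.drop j).take t).drop i
  · obtain ⟨t, ht⟩ := hS
    have hTne : ∃ s, ∀ a : A, a ∈ (w.take s).drop (j+i) := ⟨j + t, (hset t).mp ht⟩
    unfold alphaJump
    rw [if_pos hTne, if_pos ⟨t, ht⟩]
    simp only [Option.map_some]
    congr 1
    have hsmem : sInf {t | ∀ a : A, a ∈ ((w.drop j).take t).drop i}
        ∈ {t | ∀ a : A, a ∈ ((w.drop j).take t).drop i} := Nat.sInf_mem ⟨t, ht⟩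
    apply le_antisymm
    · have h1 := Nat.sInf_le (show j + sInf {t | ∀ a : A, a ∈ ((w.drop j).take t).drop i}
          ∈ {s | ∀ a : A, a ∈ (w.take s).drop (j+i)} from (hset _).mp hsmem)
      omega
    · have hTmem : sInf {s | ∀ a : A, a ∈ (w.take s).drop (j+i)}
          ∈ {s | ∀ a : A, a ∈ (w.take s).drop (j+i)} := Nat.sInf_mem hTne
      obtain ⟨hj, hmemS⟩ := hTS _ hTmem
      have h2 := Nat.sInf_le (show sInf {s | ∀ a : A, a ∈ (w.take s).drop (j+i)} - j
          ∈ {t | ∀ a : A, a ∈ ((w.drop j).take t).drop i} from hmemS)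
      omega
  · have hTne : ¬ ∃ s, ∀ a : A, a ∈ (w.take s).drop (j+i) := by
      rintro ⟨s, hs⟩
      exact hS ⟨s - j, (hTS s hs).2⟩
    unfold alphaJump
    rw [if_neg hTne, if_neg hS]
    rfl

lemma alphaIter_shift [Nonempty A] (w : List A) (n j i : ℕ) :
    alphaIter w n (j + i) = (alphaIter (w.drop j) n i).map (· + j) := by
  induction n generalizing i with
  | zero => simp [alphaIter_zero, Nat.add_comm]
  | succ n ih =>
      rw [alphaIter_succ, alphaIter_succ, ih]
      cases hd : alphaIter (w.drop j) n i with
      | none => simp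
      | some p =>
          simp only [Option.map_some, Option.bind_some]
          rw [show p + j = j + p from by omega, alphaJump_shift]

lemma alphaJump_prefix [Nonempty A] {x : List A} (y : List A) {i j : ℕ}
    (h : alphaJump x i = some j) : alphaJump (x ++ y) i = some j := by
  classical
  obtain ⟨hij, hjx, hmem, hmin⟩ := alphaJump_spec h
  have hxz : ∀ t ≤ x.length, (x ++ y).take t = x.take t := by
    intro t ht
    rw [List.take_append, Nat.sub_eq_zero_of_le ht]
    simp
  have hTmem : ∀ a : A, a ∈ ((x++y).take j).drop i := by
    rw [hxz j hjx]; exact hmem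
  unfold alphaJump
  rw [if_pos ⟨j, hTmem⟩]
  congr 1
  apply le_antisymm (Nat.sInf_le
    (show j ∈ {t | ∀ a : A, a ∈ ((x++y).take t).drop i} from hTmem))
  by_contra hlt
  push_neg at hlt
  have hmem' := Nat.sInf_mem (⟨j, hTmem⟩ :
    Set.Nonempty {t | ∀ a : A, a ∈ ((x++y).take t).drop i})
  set s := sInf {t | ∀ a : A, a ∈ ((x++y).take t).drop i} with hs
  have hsx : s ≤ x.length := by omega
  rw [Set.mem_setOf_eq, hxz s hsx] at hmem'
  exact hmin s hlt hmem'

lemma alphaIter_prefix [Nonempty A] {x : List A} (y : List A) {n i p : ℕ}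
    (h : alphaIter x n i = some p) : alphaIter (x ++ y) n i = some p := by
  induction n generalizing i with
  | zero => simpa [alphaIter_zero] using h
  | succ n ih =>
      obtain ⟨j, hj⟩ := alphaIter_isSome_succ x n i (by rw [h]; rfl)
      rw [alphaIter_succ' x n i j hj] at h
      rw [alphaIter_succ' _ n i j (alphaJump_prefix y hj)]
      exact ih h

lemma take_drop_append {y : List A} {i j p : ℕ} (hij : i ≤ j) (hjp : j ≤ p)
    (hjy : j ≤ y.length) :
    (y.take j).drop i ++ (y.take p).drop j = (y.take p).drop i := by
  have h1 : (y.take p).take j = y.take j := by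
    rw [List.take_take, min_eq_left hjp]
  conv_rhs => rw [← List.take_append_drop j (y.take p), h1]
  rw [List.drop_append]
  rw [show i - (y.take j).length = 0 from by simp [List.length_take]; omega, List.drop_zero]

lemma sublist_of_alphaIter [Nonempty A] {y : List A} {n i p : ℕ}
    (h : alphaIter y n i = some p) :
    ∀ x : List A, x.length = n → x.Sublist ((y.take p).drop i) := by
  induction n generalizing i with
  | zero =>
      intro x hx
      rw [List.length_eq_zero_iff] at hx
      subst hx
      exact List.nil_sublist _
  | succ n ih =>
      intro x hx
      obtain ⟨j, hj⟩ := alphaIter_isSome_succ y n i (by rw [h]; rfl)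
      rw [alphaIter_succ' y n i j hj] at h
      obtain ⟨hij, hjy, hmem, -⟩ := alphaJump_spec hj
      have hjp : j ≤ p := by have := alphaIter_le h; omega
      cases x with
      | nil => simp at hx
      | cons a x' =>
          have h1 : [a].Sublist ((y.take j).drop i) := List.singleton_sublist.mpr (hmem a)
          have h2 : x'.Sublist ((y.take p).drop j) := ih h x' (by simpa using hx)
          have h3 := h1.append h2
          rw [take_drop_append (le_of_lt hij) hjp hjy] at h3
          simpa using h3

lemma isSome_of_universal [Nonempty A] :
    ∀ (k : ℕ) (y : List A), (∀ x : List A, x.length = k → x.Sublist y) →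
      (alphaIter y k 0).isSome := by
  intro k
  induction k with
  | zero => intro y _; simp [alphaIter_zero]
  | succ k ih =>
      intro y h
      have hrich : ∀ a : A, a ∈ y := by
        intro a
        have hs := h (List.replicate (k+1) a) (by simp)
        exact hs.subset (by simp)
      have hcond : ∀ a : A, a ∈ (y.take y.length).drop 0 := by
        simpa using hrich
      obtain ⟨j, hj, hjle⟩ := alphaJump_isSome_of hcond
      obtain ⟨h0j, hjy, hmem, hmin⟩ := alphaJump_spec hj
      have hj1 : j - 1 < y.length := by omega
      set c := y.get ⟨j - 1, hj1⟩ with hc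
      have htake : y.take j = y.take (j-1) ++ [c] := by
        have h' := List.take_concat_get (l := y) (i := j-1) hj1
        rw [show (j-1)+1 = j from by omega] at h'
        rw [← h', List.concat_eq_append]
        simp [hc, List.get_eq_getElem]
      have hcnot : c ∉ y.take (j - 1) := by
        intro hcmem
        refine hmin (j-1) (by omega) ?_
        intro a
        have hma := hmem a
        rw [List.drop_zero] at hma ⊢
        rw [htake] at hma
        rcases List.mem_append.mp hma with h' | h'
        · exact h'
        · rw [List.mem_singleton] at h'
          rw [h']
          exact hcmem
      have hdrop : ∀ x : List A, x.length = k → x.Sublist (y.drop j) := by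
        intro x hx
        have hsub := h (c :: x) (by simp [hx])
        have hy : y = y.take (j-1) ++ (c :: y.drop j) := by
          conv_lhs => rw [← List.take_append_drop j y]
          rw [htake, List.append_assoc, List.singleton_append]
        rw [hy] at hsub
        obtain ⟨x₁, x₂, hxeq, hx1, hx2⟩ := List.sublist_append_iff.mp hsub
        cases x₁ with
        | nil =>
            simp only [List.nil_append] at hxeq
            subst hxeq
            exact List.cons_sublist_cons.mp hx2
        | cons b x₁' =>
            exfalso
            have hbc : c = b := by
              have h5 : c :: x = b :: (x₁' ++ x₂) := by simpa using hxeq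
              injection h5
            have hbmem : b ∈ y.take (j-1) := hx1.subset (by simp)
            rw [← hbc] at hbmem
            exact hcnot hbmem
      have hk := ih (y.drop j) hdrop
      have hsh := alphaIter_shift y k j 0
      rw [Nat.add_zero] at hsh
      obtain ⟨q, hq⟩ := Option.isSome_iff_exists.mp hk
      have hsome : (alphaIter y k j).isSome := by rw [hsh, hq]; rfl
      rw [alphaIter_succ' y k 0 j hj]
      exact hsome

lemma join_cons' (a : List A) (l : List (List A)) : (a :: l).flatten = a ++ l.flatten := rfl

lemma universal_le_numArches [Nonempty A] {y : List A} {k : ℕ}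
    (h : ∀ x : List A, x.length = k → x.Sublist y) : k ≤ numArches y :=
  le_numArches (isSome_of_universal k y h)

lemma numArches_le_length [Nonempty A] (w : List A) : numArches w ≤ w.length := by
  apply csSup_le ⟨0, by simp [alphaIter_zero]⟩
  intro n hn
  cases n with
  | zero => omega
  | succ n =>
      obtain ⟨p, hp⟩ := Option.isSome_iff_exists.mp hn
      have := alphaIter_le hp
      have := alphaIter_le_length hp
      omega

lemma numArches_append_le [Nonempty A] {x : List A} {m : ℕ} (y : List A)
    (hx : alphaIter x m 0 = some x.length) :
    numArches (x ++ y) ≤ m + numArches y := by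
  by_contra hlt
  push_neg at hlt
  have h1 : (alphaIter (x++y) (numArches (x++y)) 0).isSome := numArches_mem _
  have h2 : (alphaIter (x++y) (m + (numArches y + 1)) 0).isSome :=
    alphaIter_isSome_mono (by omega) h1
  have h3 : alphaIter (x++y) m 0 = some x.length := alphaIter_prefix y hx
  have h4 : alphaIter (x++y) (m + (numArches y + 1)) 0
      = alphaIter (x++y) (numArches y + 1) x.length := by
    unfold alphaIter
    rw [show m + (numArches y + 1) = (numArches y + 1) + m from by omega,
      Function.iterate_add_apply]
    exact congrArg _ h3
  have h5 : alphaIter (x++y) (numArches y + 1) x.length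
      = (alphaIter y (numArches y + 1) 0).map (· + x.length) := by
    have h5' := alphaIter_shift (x++y) (numArches y + 1) x.length 0
    simpa using h5'
  rw [h4, h5] at h2
  have h6 : (alphaIter y (numArches y + 1) 0).isSome := by
    cases hq : alphaIter y (numArches y + 1) 0 with
    | none => rw [hq] at h2; simp at h2
    | some q => rfl
  have := le_numArches h6
  omega

lemma numArches_join_le [Nonempty A] {u : List A} {m : ℕ}
    (hu : alphaIter u m 0 = some u.length) :
    ∀ M, numArches (List.flatten (List.replicate M u)) ≤ M * m := by
  intro M
  induction M with
  | zero =>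
      simpa using numArches_le_length ([] : List A)
  | succ M ih =>
      rw [List.replicate_succ, join_cons']
      calc numArches (u ++ List.flatten (List.replicate M u))
          ≤ m + numArches (List.flatten (List.replicate M u)) := numArches_append_le _ hu
        _ ≤ m + M * m := by omega
        _ = (M+1) * m := by ring

lemma universal_join {u' : List A} {k : ℕ}
    (h : ∀ x : List A, x.length = k → x.Sublist u') :
    ∀ (N : ℕ) (x : List A), x.length = N * k →
      x.Sublist (List.flatten (List.replicate N u')) := by
  intro N
  induction N with
  | zero =>
      intro x hx
      simp only [Nat.zero_mul, List.length_eq_zero_iff] at hx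
      subst hx
      exact List.nil_sublist _
  | succ N ih =>
      intro x hx
      rw [Nat.succ_mul] at hx
      rw [List.replicate_succ, join_cons']
      have h1 : (x.take k).Sublist u' := by
        apply h
        rw [List.length_take, hx]
        omega
      have h2 : (x.drop k).Sublist (List.flatten (List.replicate N u')) := by
        apply ih
        rw [List.length_drop, hx]
        omega
      have h3 := h1.append h2
      rwa [List.take_append_drop] at h3

lemma conjPowEq (v w : List A) :
    ∀ N, List.flatten (List.replicate (N+1) (v ++ w))
      = v ++ List.flatten (List.replicate N (w ++ v)) ++ w := by
  intro N
  induction N with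
  | zero => simp
  | succ N ih =>
      rw [List.replicate_succ, join_cons', ih]
      rw [show (N:ℕ)+1 = N+1 from rfl, List.replicate_succ, join_cons']
      simp [List.append_assoc]

lemma sublistConjPow (v w : List A) (N : ℕ) :
    (List.flatten (List.replicate N (w ++ v))).Sublist
      (List.flatten (List.replicate (N+1) (v ++ w))) := by
  rw [conjPowEq, List.append_assoc]
  exact ((List.sublist_append_left _ w).trans (List.sublist_append_right v _))

end Aux


/-- If `u` and `u'` are conjugates and the rest `r(u)` of the arch factorization of `u`
is empty, then `ι(u') ≤ ι(u)`. -/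
theorem univIndex_conjugate_of_rest_nil {A : Type*} [Fintype A] [Nonempty A]
    (u u' v w : List A) (hu : u = v ++ w) (hu' : u' = w ++ v)
    (hr : archRest u = []) :
    univIndex u' ≤ univIndex u := by
  classical
  obtain ⟨p, hp⟩ := Option.isSome_iff_exists.mp (numArches_mem u)
  have hrp : u.length ≤ p := by
    unfold archRest at hr
    rw [hp] at hr
    simpa using List.drop_eq_nil_iff.mp hr
  have hple : p ≤ u.length := by
    rcases Nat.eq_zero_or_pos (numArches u) with h0 | hpos
    · rw [h0, alphaIter_zero] at hp
      simp at hp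
      omega
    · obtain ⟨m', hm'⟩ : ∃ m', numArches u = m' + 1 := ⟨numArches u - 1, by omega⟩
      rw [hm'] at hp
      exact alphaIter_le_length hp
  have hmu : alphaIter u (numArches u) 0 = some u.length := by
    rw [hp]; congr 1; omega
  have hbddS : BddAbove {k : ℕ | ∀ x : List A, x.length = k → x.Sublist u} := by
    refine ⟨u.length, fun k hk => ?_⟩
    have a0 : A := Classical.arbitrary A
    have := hk (List.replicate k a0) (by simp)
    simpa using this.length_le
  have hlow : numArches u ≤ univIndex u := by
    apply le_csSup hbddS
    intro x hx
    have := sublist_of_alphaIter hmu x hx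
    simpa using this
  refine le_trans ?_ hlow
  apply csSup_le
  · exact ⟨0, fun x hx => by
      rw [List.length_eq_zero_iff] at hx; subst hx; exact List.nil_sublist _⟩
  · intro k hk
    by_contra hklt
    push_neg at hklt
    have key : ∀ N : ℕ, N * k ≤ (N+1) * numArches u := by
      intro N
      have huniv : ∀ x : List A, x.length = N * k →
          x.Sublist (List.flatten (List.replicate (N+1) u)) := by
        intro x hx
        refine (universal_join hk N x hx).trans ?_
        rw [hu, hu']
        exact sublistConjPow v w N
      exact le_trans (universal_le_numArches huniv) (numArches_join_le hmu (N+1))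
    have hK := key (numArches u + 1)
    nlinarith
end

section
/- For every word u over a finite alphabet A, ι(u) ≤ ζ(u) ≤ ι(u) + 1. -/
/-- The circular subword universality index `ζ(u)`: the maximum of `ι(u')` over all
conjugates `u'` of `u` (equivalently, over all rotations of `u`). -/
noncomputable def circIndex {A : Type*} (u : List A) : ℕ :=
  (Finset.range (u.length + 1)).sup fun i => univIndex (u.drop i ++ u.take i)

open List

section Aux

variable {A : Type*}

/-- If `us` is a list of `k` blocks, each containing every letter, then any word of
length `k` is a sublist of `us.flatten`. -/
lemma sublist_flatten_of_blocks (us : List (List A))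
    (hc : ∀ s ∈ us, ∀ a : A, a ∈ s) :
    ∀ w : List A, w.length = us.length → w.Sublist us.flatten := by
  induction us with
  | nil =>
    intro w hw
    simp only [length_nil, List.length_eq_zero_iff] at hw
    simp [hw]
  | cons s us ih =>
    intro w hw
    cases w with
    | nil => exact nil_sublist _
    | cons a w' =>
      simp only [length_cons, Nat.add_right_cancel_iff] at hw
      have h1 : [a].Sublist s := singleton_sublist.mpr (hc s mem_cons_self a)
      have h2 : w'.Sublist us.flatten :=
        ih (fun t ht b => hc t (mem_cons_of_mem _ ht) b) w' hw
      simpa using Sublist.append h1 h2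

/-- If every word of length `k` is a sublist of `u`, then `u` has a prefix which is a
concatenation of `k` blocks, each containing every letter. -/
lemma exists_blocks [Fintype A] [Nonempty A] :
    ∀ (k : ℕ) (u : List A), (∀ w : List A, w.length = k → w.Sublist u) →
      ∃ us : List (List A), us.length = k ∧ us.flatten <+: u ∧
        ∀ s ∈ us, ∀ a : A, a ∈ s := by
  intro k
  induction k with
  | zero => intro u _; exact ⟨[], rfl, by simp, by simp⟩
  | succ k ih =>
    intro u hu
    classical
    have hmem : ∀ a : A, a ∈ u := by
      intro a
      have h := hu (replicate (k+1) a) (by simp)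
      exact h.subset (mem_replicate.mpr ⟨Nat.succ_ne_zero k, rfl⟩)
    obtain ⟨c, -, hc⟩ := Finset.exists_max_image Finset.univ
      (fun a : A => u.idxOf a) ⟨Classical.arbitrary A, Finset.mem_univ _⟩
    set n := u.idxOf c + 1 with hn
    have hcomplete : ∀ a : A, a ∈ u.take n := by
      intro a
      have ha : u.idxOf a < u.length := idxOf_lt_length_iff.mpr (hmem a)
      have halt : u.idxOf a < n := Nat.lt_succ_of_le (hc a (Finset.mem_univ a))
      have hlen : u.idxOf a < (u.take n).length := by
        simp only [length_take]
        exact lt_min halt ha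
      have : (u.take n)[u.idxOf a] = a := by
        rw [List.getElem_take]
        exact getElem_idxOf ha
      rw [← this]
      exact getElem_mem hlen
    have hrest : ∀ w : List A, w.length = k → w.Sublist (u.drop n) := by
      intro w hw
      have h1 : (c :: w).Sublist u := hu _ (by simp [hw])
      obtain ⟨r₁, r₂, hu_eq, hc_mem, hw_sub⟩ := cons_sublist_iff.mp h1
      have hnr : n ≤ r₁.length := by
        have : u.idxOf c < r₁.length := by
          rw [hu_eq, idxOf_append_of_mem hc_mem]
          exact idxOf_lt_length_iff.mpr hc_mem
        omega
      have hdrop : u.drop n = r₁.drop n ++ r₂ := by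
        rw [hu_eq, drop_append, Nat.sub_eq_zero_of_le hnr, drop_zero]
      rw [hdrop]
      exact hw_sub.trans (sublist_append_right _ _)
    obtain ⟨us, hlen, hpre, hcomp⟩ := ih (u.drop n) hrest
    obtain ⟨rest, hrest_eq⟩ := hpre
    refine ⟨u.take n :: us, by simp [hlen], ⟨rest, ?_⟩, ?_⟩
    · rw [flatten_cons, append_assoc, hrest_eq, take_append_drop]
    · intro s hs a
      rcases mem_cons.mp hs with h | h
      · rw [h]; exact hcomplete a
      · exact hcomp s h a

lemma bddAbove_univSet [Nonempty A] (u : List A) :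
    BddAbove {k : ℕ | ∀ w : List A, w.length = k → w.Sublist u} := by
  refine ⟨u.length, fun k hk => ?_⟩
  have := hk (replicate k (Classical.arbitrary A)) (by simp)
  simpa using this.length_le

lemma le_univIndex [Nonempty A] {u : List A} {k : ℕ}
    (h : ∀ w : List A, w.length = k → w.Sublist u) : k ≤ univIndex u :=
  le_csSup (bddAbove_univSet u) h

lemma univIndex_spec [Nonempty A] (u : List A) :
    ∀ w : List A, w.length = univIndex u → w.Sublist u := by
  have h0 : 0 ∈ {k : ℕ | ∀ w : List A, w.length = k → w.Sublist u} := by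
    intro w hw
    simp only [List.length_eq_zero_iff] at hw
    simp [hw]
  exact Nat.sSup_mem ⟨0, h0⟩ (bddAbove_univSet u)

/-- A prefix of `w ++ v` of length at most `w.length` is a prefix of `w`. -/
lemma prefix_of_prefix_append {p w v : List A} (h : p <+: w ++ v)
    (hl : p.length ≤ w.length) : p <+: w := by
  have := prefix_iff_eq_take.mp h
  rw [take_append, Nat.sub_eq_zero_of_le hl, take_zero, append_nil] at this
  rw [this]
  exact take_prefix _ _

/-- Key rotation lemma: `ι(w·v) ≤ ι(v·w) + 1`. -/
lemma rot_le [Fintype A] [Nonempty A] (v w : List A) :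
    univIndex (w ++ v) ≤ univIndex (v ++ w) + 1 := by
  classical
  set m := univIndex (w ++ v) with hm
  obtain ⟨us, hlen, hpre, hcomp⟩ := exists_blocks m (w ++ v) (univIndex_spec _)
  by_cases hcase : us.flatten.length ≤ w.length
  · -- all blocks fit inside w
    have h1 : us.flatten <+: w := prefix_of_prefix_append hpre hcase
    have h2 : us.flatten.Sublist (v ++ w) :=
      h1.sublist.trans (sublist_append_right _ _)
    have : m ≤ univIndex (v ++ w) :=
      le_univIndex (fun x hx =>
        (sublist_flatten_of_blocks us hcomp x (hx.trans hlen.symm)).trans h2)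
    omega
  · push_neg at hcase
    set P : ℕ → Prop := fun j => ((us.take j).flatten).length ≤ w.length with hP
    set t := Nat.findGreatest P m with ht
    have ht_le : t ≤ m := Nat.findGreatest_le m
    have htP : P t := Nat.findGreatest_spec (Nat.zero_le m) (by simp [hP])
    have ht_lt : t < m := by
      rcases lt_or_eq_of_le ht_le with h | h
      · exact h
      · exfalso
        have := htP
        rw [hP] at this
        simp only [h, ← hlen, take_length] at this
        omega
    have htnot : ¬ P (t + 1) :=
      Nat.findGreatest_is_greatest (Nat.lt_succ_self t) ht_lt
    set us₁ := us.take t with hus₁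
    set us₂ := us.drop (t + 1) with hus₂
    obtain ⟨rest, hr⟩ := id hpre
    -- (a) us₁.flatten is a sublist of w
    have h1pre : us₁.flatten <+: w ++ v := by
      refine IsPrefix.trans ?_ hpre
      have : us.flatten = us₁.flatten ++ (us.drop t).flatten := by
        rw [← flatten_append, take_append_drop]
      exact ⟨(us.drop t).flatten, this.symm⟩
    have h1 : us₁.flatten.Sublist w :=
      (prefix_of_prefix_append h1pre htP).sublist
    -- (b) us₂.flatten is a sublist of v
    have h2 : us₂.flatten.Sublist v := by
      have heq : w ++ v = (us.take (t+1)).flatten ++ (us₂.flatten ++ rest) := by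
        rw [← hr]
        rw [show us.flatten = (us.take (t+1)).flatten ++ us₂.flatten by
          rw [← flatten_append, take_append_drop]]
        rw [append_assoc]
      have hd : (w ++ v).drop ((us.take (t+1)).flatten.length) = us₂.flatten ++ rest := by
        rw [heq, drop_left]
      have hgt : w.length < (us.take (t+1)).flatten.length := by
        have := htnot; rw [hP] at this; omega
      have hd2 : (w ++ v).drop ((us.take (t+1)).flatten.length)
          = v.drop ((us.take (t+1)).flatten.length - w.length) := by
        rw [drop_append, drop_eq_nil_of_le (le_of_lt hgt), nil_append]
      have : us₂.flatten.Sublist ((w ++ v).drop ((us.take (t+1)).flatten.length)) := by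
        rw [hd]; exact sublist_append_left _ _
      rw [hd2] at this
      exact this.trans (drop_sublist _ _)
    have hall : (us₂ ++ us₁).flatten.Sublist (v ++ w) := by
      rw [flatten_append]; exact Sublist.append h2 h1
    have hlen2 : (us₂ ++ us₁).length = m - 1 := by
      simp only [length_append, hus₁, hus₂, length_take, length_drop, hlen]
      omega
    have : m - 1 ≤ univIndex (v ++ w) :=
      le_univIndex (fun x hx =>
        (sublist_flatten_of_blocks (us₂ ++ us₁)
          (by
            intro s hs a
            rcases mem_append.mp hs with h | h
            · exact hcomp s (mem_of_mem_drop h) a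
            · exact hcomp s (mem_of_mem_take h) a)
          x (by rw [hx, hlen2])).trans hall)
    omega

end Aux

/-- `ι(u) ≤ ζ(u) ≤ ι(u) + 1`. -/
theorem univIndex_le_circIndex_le {A : Type*} [Fintype A] [Nonempty A] (u : List A) :
    univIndex u ≤ circIndex u ∧ circIndex u ≤ univIndex u + 1 := by
  constructor
  · have h0 : univIndex u = univIndex (u.drop 0 ++ u.take 0) := by simp
    rw [h0, circIndex]
    exact Finset.le_sup (f := fun i => univIndex (u.drop i ++ u.take i))
      (Finset.mem_range.mpr (Nat.succ_pos _))
  · rw [circIndex]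
    apply Finset.sup_le
    intro i _
    have := rot_le (u.take i) (u.drop i)
    rwa [take_append_drop] at this
end

section
/- Let u = a₁⋯a_ℓ be a rich word over a finite alphabet A with arch factorization s₁⋯s_m·r, and let λ₁ = |s₁|. Then there exists some d with 0 < d ≤ λ₁ such that ζ(u) = ι(u^{∼d}), where u^{∼d} = a_{d+1}⋯a_ℓ a₁⋯a_d is the d-th conjugate of u. -/
/-- The length `λ₁ = |s₁|` of the first arch of a (rich) word `u`:
the least `j` such that the prefix `u(0,j)` contains every letter of `A`. -/
noncomputable def firstArchLen {A : Type*} (u : List A) : ℕ :=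
  sInf {j : ℕ | ∀ a : A, a ∈ u.take j}

set_option linter.unusedSectionVars false

namespace CircProof
open List

variable {A : Type*}




lemma subAll_down [Nonempty A] {u : List A} {k j : ℕ}
    (h : ∀ w : List A, w.length = k → w.Sublist u) (hj : j ≤ k) :
    ∀ w : List A, w.length = j → w.Sublist u := by
  intro w hw
  obtain ⟨a⟩ := (inferInstance : Nonempty A)
  have h2 := h (w ++ List.replicate (k - j) a) (by simp [hw]; omega)
  exact (w.sublist_append_left _).trans h2

lemma le_univIndex_iff [Nonempty A] {u : List A} {k : ℕ} :
    k ≤ univIndex u ↔ ∀ w : List A, w.length = k → w.Sublist u := by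
  obtain ⟨a⟩ := (inferInstance : Nonempty A)
  have hne : {k : ℕ | ∀ w : List A, w.length = k → w.Sublist u}.Nonempty := by
    refine ⟨0, fun w hw => ?_⟩
    simp [List.length_eq_zero_iff.mp hw]
  have hbdd : BddAbove {k : ℕ | ∀ w : List A, w.length = k → w.Sublist u} := by
    refine ⟨u.length, fun m hm => ?_⟩
    have := (hm (List.replicate m a) (by simp)).length_le
    simpa using this
  constructor
  · intro hk
    have hmem := Nat.sSup_mem hne hbdd
    exact subAll_down hmem hk
  · intro h
    exact le_csSup hbdd h


def Arches : ℕ → List A → Prop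
  | 0, _ => True
  | (k+1), v => ∃ b t, v = b ++ t ∧ (∀ a : A, a ∈ b) ∧ Arches k t

lemma arches_sublist : ∀ {k : ℕ} {v : List A}, Arches k v →
    ∀ w : List A, w.length = k → w.Sublist v := by
  intro k
  induction k with
  | zero => intro v _ w hw; simp [List.length_eq_zero_iff.mp hw]
  | succ k ih =>
    rintro v ⟨b, t, rfl, hb, ht⟩ w hw
    match w with
    | c :: w' =>
      have h1 : [c].Sublist b := List.singleton_sublist.mpr (hb c)
      have h2 : w'.Sublist t := ih ht w' (by simpa using hw)
      simpa using h1.append h2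

-- helper: cancel a distinguished letter
lemma sublist_after_marker {c : A} : ∀ {pre t w : List A}, (c :: w).Sublist (pre ++ c :: t) →
    c ∉ pre → w.Sublist t := by
  intro pre
  induction pre with
  | nil =>
    intro t w h _
    rw [List.nil_append] at h
    exact List.cons_sublist_cons.mp h
  | cons x pre ih =>
    intro t w h hc
    simp only [List.mem_cons, not_or] at hc
    rw [List.cons_append] at h
    cases h with
    | cons _ h' => exact ih h' hc.2
    | cons_cons => exact absurd rfl hc.1

lemma subAll_arches [Nonempty A] : ∀ {k : ℕ} {v : List A},
    (∀ w : List A, w.length = k → w.Sublist v) → Arches k v := by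
  intro k
  induction k with
  | zero => intro v _; trivial
  | succ k ih =>
    intro v h
    -- v is rich
    have hv : ∀ a : A, a ∈ v := by
      intro a
      have := h (List.replicate (k+1) a) (by simp)
      exact this.subset (by simp)
    -- first arch
    set S : Set ℕ := {j | ∀ a : A, a ∈ v.take j} with hS
    have hSne : S.Nonempty := ⟨v.length, fun a => by rw [List.take_length]; exact hv a⟩
    set lam := sInf S with hlam
    have hmem : lam ∈ S := Nat.sInf_mem hSne
    have hpos : 0 < lam := by
      rcases Nat.eq_zero_or_pos lam with h0 | h0
      · exfalso
        obtain ⟨a⟩ := (inferInstance : Nonempty A)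
        have := hmem a
        rw [h0] at this
        simp at this
      · exact h0
    have hlamle : lam ≤ v.length := by
      by_contra hgt
      push_neg at hgt
      have : v.length ∈ S := by
        intro a
        rw [List.take_length]
        exact hv a
      exact absurd (Nat.sInf_le this) (by omega)
    -- the completing letter
    have hlt : lam - 1 < v.length := by omega
    set c := v.get ⟨lam - 1, hlt⟩ with hc
    have htake : v.take lam = v.take (lam - 1) ++ [c] := by
      have : lam = (lam - 1) + 1 := by omega
      rw [this, List.take_succ]
      simp [hc, List.getElem?_eq_getElem hlt]
    have hnotmem : c ∉ v.take (lam - 1) := by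
      have hns : lam - 1 ∉ S := fun hmm => absurd (Nat.sInf_le hmm) (by omega)
      simp only [hS, Set.mem_setOf_eq, not_forall] at hns
      obtain ⟨a, ha⟩ := hns
      have ham : a ∈ v.take lam := hmem a
      rw [htake] at ham
      rcases List.mem_append.mp ham with h1 | h1
      · exact absurd h1 ha
      · rw [← List.mem_singleton.mp h1]; exact ha
    -- decompose v around position lam - 1
    have hsplit : v = v.take (lam - 1) ++ c :: v.drop lam := by
      conv_lhs => rw [← List.take_append_drop (lam - 1) v]
      congr 1
      rw [List.drop_eq_getElem_cons hlt]
      have h1 : v[lam-1] = c := rfl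
      have h2 : lam - 1 + 1 = lam := by omega
      rw [h1, h2]
    refine ⟨v.take lam, v.drop lam, (List.take_append_drop lam v).symm, hmem, ?_⟩
    apply ih
    intro w hw
    have hcw := h (c :: w) (by simp [hw])
    rw [hsplit] at hcw
    exact sublist_after_marker hcw hnotmem


/-- segment of the infinite word -/
def seg (p : ℕ → A) (x y : ℕ) : List A := (List.range (y - x)).map (fun j => p (x + j))

lemma seg_length (p : ℕ → A) (x y : ℕ) : (seg p x y).length = y - x := by simp [seg]

lemma mem_seg {p : ℕ → A} {x y : ℕ} {a : A} :
    a ∈ seg p x y ↔ ∃ j, x ≤ j ∧ j < y ∧ p j = a := by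
  simp only [seg, List.mem_map, List.mem_range]
  constructor
  · rintro ⟨j, hj, rfl⟩; exact ⟨x + j, by omega, by omega, rfl⟩
  · rintro ⟨j, h1, h2, rfl⟩; exact ⟨j - x, by omega, by rw [Nat.add_sub_cancel' h1]⟩

lemma seg_split (p : ℕ → A) {x y z : ℕ} (h1 : x ≤ y) (h2 : y ≤ z) :
    seg p x z = seg p x y ++ seg p y z := by
  apply List.ext_getElem
  · simp [seg_length]; omega
  · intro n hn hn'
    simp only [seg, List.getElem_map, List.getElem_range]
    rcases lt_or_ge n (y - x) with h | h
    · rw [List.getElem_append_left (by simp [seg_length]; omega)]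
      simp only [seg, List.getElem_map, List.getElem_range]
    · rw [List.getElem_append_right (by simp [seg_length]; omega)]
      simp only [seg, List.getElem_map, List.getElem_range, List.length_map,
        List.length_range]
      congr 1
      omega

/-- richness of a segment -/
def RichSeg (p : ℕ → A) (x y : ℕ) : Prop := ∀ a : A, ∃ j, x ≤ j ∧ j < y ∧ p j = a

/-- next greedy arch end -/
noncomputable def nxt (p : ℕ → A) (x : ℕ) : ℕ := sInf {z | RichSeg p x z}

section Periodic

variable [Nonempty A] {p : ℕ → A} {L : ℕ}
variable (hp : ∀ a : A, ∃ j, j < L ∧ p j = a) (hper : ∀ n, p (n + L) = p n)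

include hper in
lemma p_add_mul (m n : ℕ) : p (n + m * L) = p n := by
  induction m with
  | zero => simp
  | succ m ih => rw [Nat.succ_mul, ← Nat.add_assoc, hper, ih]

include hp hper in
lemma richSeg_window (x : ℕ) : RichSeg p x (x + L) := by
  intro a
  obtain ⟨j0, hj0, hpj0⟩ := hp a
  have hL : 0 < L := by omega
  have hdm := Nat.div_add_mod x L
  have hmul : x / L * L = L * (x / L) := Nat.mul_comm _ _
  have hmod := Nat.mod_lt x hL
  by_cases hc : x % L ≤ j0
  · refine ⟨j0 + (x / L) * L, by omega, by omega, by rw [p_add_mul hper]; exact hpj0⟩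
  · refine ⟨j0 + (x / L + 1) * L, ?_, ?_, by rw [p_add_mul hper]; exact hpj0⟩
    · simp only [Nat.add_mul, Nat.one_mul]; omega
    · simp only [Nat.add_mul, Nat.one_mul]; omega

lemma richSeg_lt {x y : ℕ} (h : RichSeg p x y) : x < y := by
  obtain ⟨a⟩ := (inferInstance : Nonempty A)
  obtain ⟨j, h1, h2, _⟩ := h a
  omega

include hp hper in
lemma nxt_rich (x : ℕ) : RichSeg p x (nxt p x) := by
  have h : {z | RichSeg p x z}.Nonempty := ⟨x + L, richSeg_window hp hper x⟩
  exact Nat.sInf_mem h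

lemma nxt_le {x z : ℕ} (h : RichSeg p x z) : nxt p x ≤ z := Nat.sInf_le h

include hp hper in
lemma lt_nxt (x : ℕ) : x < nxt p x := richSeg_lt (nxt_rich hp hper x)

include hp hper in
lemma nxt_window (x : ℕ) : nxt p x ≤ x + L := nxt_le (richSeg_window hp hper x)

include hp hper in
lemma nxt_mono {x y : ℕ} (h : x ≤ y) : nxt p x ≤ nxt p y := by
  apply nxt_le
  intro a
  obtain ⟨j, h1, h2, h3⟩ := nxt_rich hp hper y a
  exact ⟨j, by omega, h2, h3⟩

include hp hper in
lemma nxt_shift (x : ℕ) : nxt p (x + L) = nxt p x + L := by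
  apply Nat.le_antisymm
  · apply nxt_le
    intro a
    obtain ⟨j, h1, h2, h3⟩ := nxt_rich hp hper x a
    exact ⟨j + L, by omega, by omega, by rw [hper]; exact h3⟩
  · have hrich := nxt_rich hp hper (x + L)
    have hgt : x + L < nxt p (x + L) := richSeg_lt hrich
    have : RichSeg p x (nxt p (x + L) - L) := by
      intro a
      obtain ⟨j, h1, h2, h3⟩ := hrich a
      refine ⟨j - L, by omega, by omega, ?_⟩
      have hj : L ≤ j := by omega
      have heq : p (j - L) = p j := by
        conv_rhs => rw [← Nat.sub_add_cancel hj]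
        rw [hper]
      exact heq.trans h3
    have := nxt_le this
    omega

include hp hper in
lemma iter_nxt_shift (k x : ℕ) : (nxt p)^[k] (x + L) = (nxt p)^[k] x + L := by
  induction k generalizing x with
  | zero => simp
  | succ k ih =>
    rw [Function.iterate_succ_apply, Function.iterate_succ_apply,
      nxt_shift hp hper, ih]

include hp hper in
lemma iter_nxt_mono {k : ℕ} {x y : ℕ} (h : x ≤ y) : (nxt p)^[k] x ≤ (nxt p)^[k] y := by
  induction k generalizing x y with
  | zero => simpa
  | succ k ih =>
    rw [Function.iterate_succ_apply, Function.iterate_succ_apply]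
    exact ih (nxt_mono hp hper h)

include hp hper in
lemma le_iter_nxt (k x : ℕ) : x ≤ (nxt p)^[k] x := by
  induction k generalizing x with
  | zero => simp
  | succ k ih =>
    rw [Function.iterate_succ_apply]
    exact le_trans (le_of_lt (lt_nxt hp hper x)) (ih _)

end Periodic

section Periodic2

variable [Nonempty A] {p : ℕ → A} {L : ℕ}
variable (hp : ∀ a : A, ∃ j, j < L ∧ p j = a) (hper : ∀ n, p (n + L) = p n)

lemma richSeg_iff_seg {x e : ℕ} : RichSeg p x e ↔ ∀ a : A, a ∈ seg p x e := by
  constructor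
  · intro h a; exact mem_seg.mpr (h a)
  · intro h a; exact mem_seg.mp (h a)

include hp hper in
lemma arches_seg_iff : ∀ {k x e : ℕ}, x ≤ e →
    (Arches k (seg p x e) ↔ (nxt p)^[k] x ≤ e) := by
  intro k
  induction k with
  | zero => intro x e h; simpa [Arches] using h
  | succ k ih =>
    intro x e hxe
    constructor
    · rintro ⟨b, t, hsplit, hb, ht⟩
      have hblen : b.length ≤ e - x := by
        have := congrArg List.length hsplit
        simp [seg_length] at this
        omega
      have hbx : x + b.length ≤ e := by
        -- b nonempty since rich
        omega
      have hseg2 : seg p x e = seg p x (x + b.length) ++ seg p (x + b.length) e :=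
        seg_split p (by omega) hbx
      have hbeq : b = seg p x (x + b.length) ∧ t = seg p (x + b.length) e := by
        have hlen : b.length = (seg p x (x + b.length)).length := by
          simp [seg_length]
        have := List.append_inj (hsplit.symm.trans hseg2) hlen
        exact this
      have hrichb : RichSeg p x (x + b.length) := by
        rw [richSeg_iff_seg]
        intro a
        rw [← hbeq.1]
        exact hb a
      have hxlt : x < x + b.length := richSeg_lt hrichb
      have h1 : nxt p x ≤ x + b.length := nxt_le hrichb
      have h2 : (nxt p)^[k] (x + b.length) ≤ e := by
        rw [← ih (by omega)]
        rw [← hbeq.2]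
        exact ht
      rw [Function.iterate_succ_apply]
      exact le_trans (iter_nxt_mono hp hper h1) h2
    · intro h
      rw [Function.iterate_succ_apply] at h
      have h1 : x < nxt p x := lt_nxt hp hper x
      have h2 : nxt p x ≤ e := le_trans (le_iter_nxt hp hper k _) h
      refine ⟨seg p x (nxt p x), seg p (nxt p x) e, seg_split p (by omega) h2, ?_, ?_⟩
      · exact (richSeg_iff_seg).mp (nxt_rich hp hper x)
      · exact (ih h2).mpr h

end Periodic2

section Shift

variable [Nonempty A] {p : ℕ → A} {L : ℕ}
variable (hp : ∀ a : A, ∃ j, j < L ∧ p j = a) (hper : ∀ n, p (n + L) = p n)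

include hp hper in
lemma shift_case0 {k : ℕ} (h : (nxt p)^[k] 0 ≤ L) :
    ∃ d, 1 ≤ d ∧ d ≤ nxt p 0 ∧ (nxt p)^[k] d ≤ d + L := by
  refine ⟨nxt p 0, lt_nxt hp hper 0, le_refl _, ?_⟩
  have h1 : (nxt p)^[k] (nxt p 0) = nxt p ((nxt p)^[k] 0) := by
    rw [← Function.iterate_succ_apply, Function.iterate_succ_apply']
  rw [h1]
  calc nxt p ((nxt p)^[k] 0) ≤ nxt p L := nxt_mono hp hper h
    _ = nxt p (0 + L) := by rw [Nat.zero_add]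
    _ = nxt p 0 + L := nxt_shift hp hper 0

include hp hper in
lemma shift_main {i k : ℕ} (hi : i ≤ L) (h : (nxt p)^[k] i ≤ i + L) :
    ∃ d, 1 ≤ d ∧ d ≤ nxt p 0 ∧ (nxt p)^[k] d ≤ d + L := by
  by_cases hcase : 1 ≤ i ∧ i ≤ nxt p 0
  · exact ⟨i, hcase.1, hcase.2, h⟩
  -- reduce i = L to i = 0
  rcases Nat.eq_or_lt_of_le hi with rfl | hiL
  · apply shift_case0 hp hper (k := k)
    have := iter_nxt_shift hp hper k 0
    rw [Nat.zero_add] at this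
    omega
  by_cases hk0 : (nxt p)^[k] i ≤ L
  · exact shift_case0 hp hper (le_trans (iter_nxt_mono hp hper (Nat.zero_le i)) hk0)
  push_neg at hk0
  -- find minimal s with L ≤ (nxt p)^[s] i
  have hex : ∃ s, L ≤ (nxt p)^[s] i := ⟨k, le_of_lt hk0⟩
  set s := Nat.find hex with hs
  have hsspec : L ≤ (nxt p)^[s] i := Nat.find_spec hex
  have hsk : s ≤ k := Nat.find_min' hex (le_of_lt hk0)
  have hs1 : 1 ≤ s := by
    rcases Nat.eq_zero_or_pos s with h0 | h0
    · exfalso; rw [h0] at hsspec; simp at hsspec; omega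
    · exact h0
  have hsprev : (nxt p)^[s - 1] i < L := by
    have := Nat.find_min hex (m := s - 1) (by omega)
    omega
  have hdecomp : (nxt p)^[k] i = (nxt p)^[k - s] ((nxt p)^[s] i) := by
    rw [← Function.iterate_add_apply]
    congr 1
    omega
  rcases Nat.eq_or_lt_of_le hsspec with heq | hlt
  · -- (nxt p)^[s] i = L : reduce to case0
    apply shift_case0 hp hper (k := k)
    have h2 : (nxt p)^[k - s] L ≤ i + L := by
      rw [← heq] at hdecomp
      omega
    have h3 : (nxt p)^[k - s] 0 ≤ i := by
      have := iter_nxt_shift hp hper (k - s) 0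
      rw [Nat.zero_add] at this
      omega
    have h4 : (nxt p)^[k] 0 = (nxt p)^[s] ((nxt p)^[k - s] 0) := by
      rw [← Function.iterate_add_apply]
      congr 1
      omega
    rw [h4, heq]
    exact iter_nxt_mono hp hper h3
  · -- d = (nxt p)^[s] i - L ≥ 1
    set d := (nxt p)^[s] i - L with hd
    have hdL : (nxt p)^[s] i = d + L := by omega
    refine ⟨d, by omega, ?_, ?_⟩
    · -- d ≤ nxt p 0
      obtain ⟨t, hst⟩ : ∃ t, s = t + 1 := ⟨s - 1, by omega⟩
      have h1 : (nxt p)^[s] i = nxt p ((nxt p)^[t] i) := by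
        rw [hst, Function.iterate_succ_apply']
      have htL : (nxt p)^[t] i < L := by
        have : (nxt p)^[s - 1] i < L := hsprev
        have hts : t = s - 1 := by omega
        rwa [hts]
      have h2 : nxt p ((nxt p)^[t] i) ≤ nxt p (0 + L) :=
        nxt_mono hp hper (by omega)
      rw [nxt_shift hp hper 0] at h2
      omega
    · -- (nxt p)^[k] d ≤ d + L
      have h2 : (nxt p)^[k - s] (d + L) ≤ i + L := by rw [← hdL, ← hdecomp]; exact h
      have h3 : (nxt p)^[k - s] d ≤ i := by
        have := iter_nxt_shift hp hper (k - s) d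
        omega
      have h4 : (nxt p)^[k] d = (nxt p)^[s] ((nxt p)^[k - s] d) := by
        rw [← Function.iterate_add_apply]
        congr 1
        omega
      rw [h4, ← hdL]
      exact iter_nxt_mono hp hper h3

end Shift

end CircProof

open CircProof in
/-- For a rich word `u`, the circular universality index `ζ(u)` is attained by a conjugate
`u^{∼d}` for some cutting position `d` with `0 < d ≤ λ₁ = |s₁|`, the length of the first arch. -/
theorem circIndex_attained_in_first_arch {A : Type*} [Fintype A] [Nonempty A]
    (u : List A) (hrich : ∀ a : A, a ∈ u) :
    ∃ d : ℕ, 0 < d ∧ d ≤ firstArchLen u ∧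
      circIndex u = univIndex (u.drop d ++ u.take d) := by
  obtain ⟨a0⟩ := (inferInstance : Nonempty A)
  have hℓ : 0 < u.length := List.length_pos_iff.mpr (List.ne_nil_of_mem (hrich a0))
  set ℓ := u.length with hldef
  set p : ℕ → A := fun n => u[n % ℓ]'(Nat.mod_lt n hℓ) with hpdef
  have hp : ∀ a : A, ∃ j, j < ℓ ∧ p j = a := by
    intro a
    obtain ⟨n, hn, hna⟩ := List.getElem_of_mem (hrich a)
    refine ⟨n, hn, ?_⟩
    simp only [hpdef]
    rw [← hna]
    congr 1
    exact Nat.mod_eq_of_lt hn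
  have hper : ∀ n, p (n + ℓ) = p n := by
    intro n
    simp only [hpdef]
    congr 1
    exact Nat.add_mod_right n ℓ
  -- rotations are segments
  have hrot : ∀ i, i ≤ ℓ → u.drop i ++ u.take i = seg p i (i + ℓ) := by
    intro i hi
    apply List.ext_getElem
    · simp [seg_length]; omega
    · intro n hn hn'
      have hnl : n < ℓ := by simpa [seg_length] using hn'
      have hseg : (seg p i (i + ℓ))[n] = p (i + n) := by
        simp [seg]
      rw [hseg]
      rcases lt_or_ge n (ℓ - i) with hc | hc
      · rw [List.getElem_append_left (by simp; omega)]
        rw [List.getElem_drop]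
        simp only [hpdef]
        congr 1
        exact (Nat.mod_eq_of_lt (by omega)).symm
      · rw [List.getElem_append_right (by simp; omega)]
        have hidx : n - (u.drop i).length = n - (ℓ - i) := by simp; rfl
        rw [List.getElem_take]
        simp only [hpdef]
        have hmod : (i + n) % ℓ = i + n - ℓ := by
          rw [Nat.mod_eq_sub_mod (by omega)]
          exact Nat.mod_eq_of_lt (by omega)
        congr 1
        simp only [hmod]
        simp
        omega
  -- prefixes are segments
  have htake : ∀ j, j ≤ ℓ → u.take j = seg p 0 j := by
    intro j hj
    apply List.ext_getElem
    · simp [seg_length]; omega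
    · intro n hn hn'
      have hnl : n < j := by simpa [seg_length] using hn'
      have hseg : (seg p 0 j)[n] = p n := by simp [seg]
      rw [hseg, List.getElem_take]
      simp only [hpdef]
      congr 1
      exact (Nat.mod_eq_of_lt (by omega)).symm
  -- firstArchLen is nxt p 0
  have hℓS : ℓ ∈ {j : ℕ | ∀ a : A, a ∈ u.take j} := by
    intro a
    rw [hldef, List.take_length]
    exact hrich a
  have hnw : nxt p 0 ≤ ℓ := by
    have := nxt_window hp hper 0
    omega
  have hfal : firstArchLen u = nxt p 0 := by
    apply Nat.le_antisymm
    · apply Nat.sInf_le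
      intro a
      rw [htake _ hnw]
      exact (richSeg_iff_seg).mp (nxt_rich hp hper 0) a
    · have hmem : firstArchLen u ∈ {j : ℕ | ∀ a : A, a ∈ u.take j} :=
        Nat.sInf_mem ⟨ℓ, hℓS⟩
      have hle : firstArchLen u ≤ ℓ := Nat.sInf_le hℓS
      apply nxt_le
      rw [richSeg_iff_seg]
      intro a
      rw [← htake _ hle]
      exact hmem a
  -- get the maximizing rotation
  obtain ⟨i, hi, hival⟩ := Finset.exists_mem_eq_sup (Finset.range (ℓ + 1))
    ⟨0, Finset.mem_range.mpr (by omega)⟩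
    (fun i => univIndex (u.drop i ++ u.take i))
  have hiℓ : i ≤ ℓ := by
    have := Finset.mem_range.mp hi
    omega
  set k := univIndex (u.drop i ++ u.take i) with hk
  have harch : Arches k (u.drop i ++ u.take i) :=
    subAll_arches (le_univIndex_iff.mp (le_refl _))
  rw [hrot i hiℓ] at harch
  have hit : (nxt p)^[k] i ≤ i + ℓ :=
    (arches_seg_iff hp hper (by omega)).mp harch
  obtain ⟨d, hd1, hd2, hd3⟩ := shift_main hp hper hiℓ hit
  have hdℓ : d ≤ ℓ := by omega
  have harch' : Arches k (u.drop d ++ u.take d) := by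
    rw [hrot d hdℓ]
    exact (arches_seg_iff hp hper (by omega)).mpr hd3
  have hge : k ≤ univIndex (u.drop d ++ u.take d) :=
    le_univIndex_iff.mpr (arches_sublist harch')
  have hle2 : univIndex (u.drop d ++ u.take d) ≤ circIndex u := by
    apply Finset.le_sup (f := fun i => univIndex (u.drop i ++ u.take i))
    exact Finset.mem_range.mpr (by omega)
  have hcirc : circIndex u = k := hival
  refine ⟨d, by omega, by omega, ?_⟩
  omega
end

section
/- For every word w over a finite alphabet A, ι(w) = max{ n ∈ ℕ | αⁿ(0) is defined }, where α is the arch-jumping function of w and αⁿ denotes its n-fold iteration. -/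
section Aux

variable {A : Type*} [Fintype A] [Nonempty A]

lemma alphaJump_some {w : List A} {i j : ℕ} (h : alphaJump w i = some j) :
    (∀ a : A, a ∈ (w.take j).drop i) ∧ ∀ j' < j, ∃ a : A, a ∉ (w.take j').drop i := by
  unfold alphaJump at h
  split at h
  · rename_i hex
    obtain rfl : sInf {j : ℕ | ∀ a : A, a ∈ (w.take j).drop i} = j := Option.some_inj.mp h
    refine ⟨Nat.sInf_mem hex, fun j' hj' => ?_⟩
    have := Nat.notMem_of_lt_sInf hj'
    simp only [Set.mem_setOf_eq] at this
    push_neg at this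
    exact this
  · exact absurd h (by simp)

lemma alphaJump_lt {w : List A} {i j : ℕ} (h : alphaJump w i = some j) : i < j := by
  obtain ⟨a⟩ := (inferInstance : Nonempty A)
  have hmem := (alphaJump_some h).1 a
  have hne : (w.take j).drop i ≠ [] := List.ne_nil_of_mem hmem
  rw [Ne, List.drop_eq_nil_iff, not_le, List.length_take] at hne
  exact lt_of_lt_of_le hne (min_le_left _ _)

lemma alphaJump_none {w : List A} {i : ℕ} (h : alphaJump w i = none) :
    ∃ a : A, a ∉ w.drop i := by
  unfold alphaJump at h
  split at h
  · exact absurd h (by simp)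
  · rename_i hne
    push_neg at hne
    obtain ⟨a, ha⟩ := hne w.length
    exact ⟨a, by simpa [List.take_length] using ha⟩

lemma sublist_of_alphaIter_s15 {w : List A} :
    ∀ n p, alphaIter w n 0 = some p → ∀ v : List A, v.length = n → v.Sublist (w.take p) := by
  intro n
  induction n with
  | zero =>
    intro p hp v hv
    obtain rfl : (0 : ℕ) = p := by simpa [alphaIter] using hp
    obtain rfl : v = [] := List.length_eq_zero_iff.mp hv
    simp
  | succ n ih =>
    intro p hp v hv
    rw [alphaIter, Function.iterate_succ_apply'] at hp
    change (alphaIter w n 0).bind (alphaJump w) = some p at hp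
    obtain ⟨q, hq, hjq⟩ := Option.bind_eq_some_iff.mp hp
    have hvne : v ≠ [] := by intro h; simp [h] at hv
    have hv' : v = v.dropLast ++ [v.getLast hvne] := (List.dropLast_append_getLast hvne).symm
    have hlen : v.dropLast.length = n := by rw [List.length_dropLast, hv]; omega
    have h1 : v.dropLast.Sublist (w.take q) := ih q hq _ hlen
    have hmem := (alphaJump_some hjq).1 (v.getLast hvne)
    have hqp : q < p := alphaJump_lt hjq
    have hsplit : w.take q ++ (w.take p).drop q = w.take p := by
      have ht : (w.take p).take q = w.take q := by rw [List.take_take, min_eq_left hqp.le]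
      conv_rhs => rw [← List.take_append_drop q (w.take p), ht]
    rw [hv', ← hsplit]
    exact h1.append (List.singleton_sublist.mpr hmem)

lemma sublist_drop_of_not_mem_take {B : Type*} {b : B} {v : List B} :
    ∀ (l : List B) (k : ℕ), (b :: v).Sublist l → b ∉ l.take k → v.Sublist (l.drop (k + 1))
  | [], _, h, _ => absurd h (by simp)
  | c :: t, 0, h, _ => by
    simp only [List.drop_succ_cons, List.drop_zero]
    cases h with
    | cons _ h => exact List.sublist_of_cons_sublist h
    | cons_cons _ h => exact h
  | c :: t, k + 1, h, hb => by
    simp only [List.take_succ_cons, List.mem_cons, not_or] at hb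
    simp only [List.drop_succ_cons]
    cases h with
    | cons _ h => exact sublist_drop_of_not_mem_take t k h hb.2
    | cons_cons _ h => exact absurd rfl hb.1

lemma exists_not_sublist {w : List A} :
    ∀ n i, alphaIter w n i = none → ∃ v : List A, v.length = n ∧ ¬ v.Sublist (w.drop i) := by
  intro n
  induction n with
  | zero => intro i h; exact absurd h (by simp [alphaIter])
  | succ n ih =>
    intro i h
    rw [alphaIter, Function.iterate_succ_apply] at h
    change (fun o => o.bind (alphaJump w))^[n] (alphaJump w i) = none at h
    rcases hj : alphaJump w i with _ | j
    · obtain ⟨a, ha⟩ := alphaJump_none hj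
      exact ⟨a :: List.replicate n a, by simp,
        fun hs => ha (hs.subset List.mem_cons_self)⟩
    · rw [hj] at h
      obtain ⟨v, hv, hns⟩ := ih j h
      have hij := alphaJump_lt hj
      obtain ⟨b, hbnot⟩ := (alphaJump_some hj).2 (j - 1) (by omega)
      refine ⟨b :: v, by simp [hv], fun hs => ?_⟩
      have hbt : b ∉ (w.drop i).take (j - 1 - i) := by
        rw [List.take_drop]
        have hid : i + (j - 1 - i) = j - 1 := by omega
        rw [hid]
        exact hbnot
      have h2 := sublist_drop_of_not_mem_take (w.drop i) (j - 1 - i) hs hbt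
      rw [List.drop_drop] at h2
      have hj1 : i + (j - 1 - i + 1) = j := by omega
      rw [hj1] at h2
      exact hns h2

end Aux

/-- `ι(w)` equals the largest `n` such that `αⁿ(0)` is defined, where `α` is the
arch-jumping function of `w`. -/
theorem univIndex_eq_sSup_alphaIter {A : Type*} [Fintype A] [Nonempty A] (w : List A) :
    univIndex w = sSup {n : ℕ | (alphaIter w n 0).isSome} := by
  have hset : {k : ℕ | ∀ v : List A, v.length = k → v.Sublist w}
      = {n : ℕ | (alphaIter w n 0).isSome} := by
    ext n
    simp only [Set.mem_setOf_eq]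
    constructor
    · intro h
      by_contra hne
      rw [Option.not_isSome_iff_eq_none] at hne
      obtain ⟨v, hv, hns⟩ := exists_not_sublist n 0 hne
      rw [List.drop_zero] at hns
      exact hns (h v hv)
    · intro h
      obtain ⟨p, hp⟩ := Option.isSome_iff_exists.mp h
      intro v hv
      exact (sublist_of_alphaIter_s15 n p hp v hv).trans (List.take_sublist p w)
  rw [univIndex, hset]
end
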